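/- Let q, p : ℝ → ℝ³ be smooth curves with p(t) · q(t) = 1 and p'(t) = q(t) × q'(t) for all t, and set I(t) := det(q, q', q'')(t) and Ī(t) := det(p, p', p'')(t). Then: (1) p'·q = p·q' = p'·q' = p·q'' = p''·q = 0 identically; (2) if I is nowhere zero then I(t) p(t) = q'(t) × q''(t) for all t; (3) if Ī is nowhere zero then Ī(t) q(t) = p'(t) × p''(t) and q'(t) = −p(t) × p'(t) for all t. -/

import Mathlib

open Matrix

/-- Scalar triple product on ℝ³. -/
def det3 (u v w : Fin 3 → ℝ) : ℝ := u ⬝ᵥ (v ⨯₃ w)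

private lemma cross_dot_left (a b : Fin 3 → ℝ) : (a ⨯₃ b) ⬝ᵥ a = 0 := by
  simp [crossProduct, dotProduct, Fin.sum_univ_three]; ring

private lemma cross_dot_right (a b : Fin 3 → ℝ) : (a ⨯₃ b) ⬝ᵥ b = 0 := by
  simp [crossProduct, dotProduct, Fin.sum_univ_three]; ring

private lemma triple_expansion (a b c v : Fin 3 → ℝ) :
    det3 a b c • v = (v ⬝ᵥ a) • (b ⨯₃ c) + (v ⬝ᵥ b) • (c ⨯₃ a) + (v ⬝ᵥ c) • (a ⨯₃ b) := by
  funext i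
  fin_cases i <;>
    simp [det3, crossProduct, dotProduct, Fin.sum_univ_three] <;> ring

private lemma bac_cab (a b c : Fin 3 → ℝ) :
    a ⨯₃ (b ⨯₃ c) = (a ⬝ᵥ c) • b - (a ⬝ᵥ b) • c := by
  funext i
  fin_cases i <;>
    simp [crossProduct, dotProduct, Fin.sum_univ_three] <;> ring

private lemma hasDerivAt_dot {f g : ℝ → Fin 3 → ℝ} {f' g' : Fin 3 → ℝ} {t : ℝ}
    (hf : HasDerivAt f f' t) (hg : HasDerivAt g g' t) :
    HasDerivAt (fun t => f t ⬝ᵥ g t) (f' ⬝ᵥ g t + f t ⬝ᵥ g') t := by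
  have hfi : ∀ i, HasDerivAt (fun t => f t i) (f' i) t := fun i => hasDerivAt_pi.mp hf i
  have hgi : ∀ i, HasDerivAt (fun t => g t i) (g' i) t := fun i => hasDerivAt_pi.mp hg i
  have h := (((hfi 0).mul (hgi 0)).add ((hfi 1).mul (hgi 1))).add ((hfi 2).mul (hgi 2))
  convert h using 1
  · rfl
  · rfl
  · funext t; simp [dotProduct, Fin.sum_univ_three]
  · simp [dotProduct, Fin.sum_univ_three]; ring

/-- Basic identities along integral curves of the Cartan–Engel system
`p ⬝ᵥ q = 1`, `p' = q × q'`. -/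
theorem integral_curve_identities (q p : ℝ → Fin 3 → ℝ)
    (hq : ContDiff ℝ (⊤ : ℕ∞) q) (hp : ContDiff ℝ (⊤ : ℕ∞) p)
    (hpq : ∀ t, p t ⬝ᵥ q t = 1)
    (hode : ∀ t, deriv p t = q t ⨯₃ deriv q t) :
    (∀ t, deriv p t ⬝ᵥ q t = 0 ∧ p t ⬝ᵥ deriv q t = 0 ∧
      deriv p t ⬝ᵥ deriv q t = 0 ∧ p t ⬝ᵥ deriv (deriv q) t = 0 ∧
      deriv (deriv p) t ⬝ᵥ q t = 0) ∧
    ((∀ t, det3 (q t) (deriv q t) (deriv (deriv q) t) ≠ 0) →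
      ∀ t, det3 (q t) (deriv q t) (deriv (deriv q) t) • p t
        = deriv q t ⨯₃ deriv (deriv q) t) ∧
    ((∀ t, det3 (p t) (deriv p t) (deriv (deriv p) t) ≠ 0) →
      ∀ t, det3 (p t) (deriv p t) (deriv (deriv p) t) • q t
          = deriv p t ⨯₃ deriv (deriv p) t ∧
        deriv q t = -(p t ⨯₃ deriv p t)) := by
  -- differentiability facts
  have hq' : ContDiff ℝ (⊤ : ℕ∞) (deriv q) := (contDiff_infty_iff_deriv.mp hq).2
  have hp' : ContDiff ℝ (⊤ : ℕ∞) (deriv p) := (contDiff_infty_iff_deriv.mp hp).2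
  have hqd : ∀ t, HasDerivAt q (deriv q t) t := fun t =>
    ((hq.differentiable (by simp)) t).hasDerivAt
  have hpd : ∀ t, HasDerivAt p (deriv p t) t := fun t =>
    ((hp.differentiable (by simp)) t).hasDerivAt
  have hqd' : ∀ t, HasDerivAt (deriv q) (deriv (deriv q) t) t := fun t =>
    ((hq'.differentiable (by simp)) t).hasDerivAt
  have hpd' : ∀ t, HasDerivAt (deriv p) (deriv (deriv p) t) t := fun t =>
    ((hp'.differentiable (by simp)) t).hasDerivAt
  -- (A) p' ⬝ q = 0
  have hA : ∀ t, deriv p t ⬝ᵥ q t = 0 := fun t => by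
    rw [hode t]; exact cross_dot_left _ _
  -- (C) p' ⬝ q' = 0
  have hC : ∀ t, deriv p t ⬝ᵥ deriv q t = 0 := fun t => by
    rw [hode t]; exact cross_dot_right _ _
  -- (B) p ⬝ q' = 0, from differentiating p ⬝ q = 1
  have hB : ∀ t, p t ⬝ᵥ deriv q t = 0 := by
    intro t
    have h1 : HasDerivAt (fun t => p t ⬝ᵥ q t)
        (deriv p t ⬝ᵥ q t + p t ⬝ᵥ deriv q t) t := hasDerivAt_dot (hpd t) (hqd t)
    have h2 : (fun t => p t ⬝ᵥ q t) = fun _ => (1 : ℝ) := funext hpq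
    rw [h2] at h1
    have := (hasDerivAt_const t (1 : ℝ)).unique h1
    rw [hA t] at this; linarith
  -- (D) p ⬝ q'' = 0, from differentiating p ⬝ q' = 0
  have hD : ∀ t, p t ⬝ᵥ deriv (deriv q) t = 0 := by
    intro t
    have h1 : HasDerivAt (fun t => p t ⬝ᵥ deriv q t)
        (deriv p t ⬝ᵥ deriv q t + p t ⬝ᵥ deriv (deriv q) t) t :=
      hasDerivAt_dot (hpd t) (hqd' t)
    have h2 : (fun t => p t ⬝ᵥ deriv q t) = fun _ => (0 : ℝ) := funext hB
    rw [h2] at h1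
    have := (hasDerivAt_const t (0 : ℝ)).unique h1
    rw [hC t] at this; linarith
  -- (E) p'' ⬝ q = 0, from differentiating p' ⬝ q = 0
  have hE : ∀ t, deriv (deriv p) t ⬝ᵥ q t = 0 := by
    intro t
    have h1 : HasDerivAt (fun t => deriv p t ⬝ᵥ q t)
        (deriv (deriv p) t ⬝ᵥ q t + deriv p t ⬝ᵥ deriv q t) t :=
      hasDerivAt_dot (hpd' t) (hqd t)
    have h2 : (fun t => deriv p t ⬝ᵥ q t) = fun _ => (0 : ℝ) := funext hA
    rw [h2] at h1
    have := (hasDerivAt_const t (0 : ℝ)).unique h1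
    rw [hC t] at this; linarith
  refine ⟨fun t => ⟨hA t, hB t, hC t, hD t, hE t⟩, ?_, ?_⟩
  · intro _ t
    have := triple_expansion (q t) (deriv q t) (deriv (deriv q) t) (p t)
    rw [hpq t, hB t, hD t] at this
    simpa using this
  · intro _ t
    constructor
    · have := triple_expansion (p t) (deriv p t) (deriv (deriv p) t) (q t)
      rw [dotProduct_comm, hpq t, dotProduct_comm, hA t, dotProduct_comm, hE t] at this
      simpa using this
    · have h := bac_cab (p t) (q t) (deriv q t)
      rw [← hode t, hB t, hpq t] at h
      simp at h
      rw [h]; simp
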